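/- Let A and E be real m×n matrices, b ∈ ℝᵐ, and suppose A x = b and (A + E) x̃ = b exactly. Fix an index i and let δ = dist(fᵢ, span{fⱼ : j ≠ i}) > 0, where f₁, …, fₙ are the columns of A. Then |xᵢ − x̃ᵢ| ≤ ‖E‖₂ · ‖x̃‖₂ / δ. -/

import Mathlib

open Matrix Submodule

noncomputable section

/-- The `j`-th column of `A`, as a vector of `ℝᵐ` with the Euclidean norm. -/
def col {m n : ℕ} (A : Matrix (Fin m) (Fin n) ℝ) (j : Fin n) : EuclideanSpace ℝ (Fin m) :=
  WithLp.toLp 2 (fun k => A k j)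

/-- The spectral (operator) norm of a matrix w.r.t. the Euclidean norms. -/
def opNorm {m n : ℕ} (E : Matrix (Fin m) (Fin n) ℝ) : ℝ :=
  ‖(Matrix.toEuclideanLin E).toContinuousLinearMap‖

/-- `toEuclideanLin A v` is the linear combination of the columns of `A` with coefficients `v`. -/
lemma toEuclideanLin_eq_sum_col {m n : ℕ} (A : Matrix (Fin m) (Fin n) ℝ)
    (v : EuclideanSpace ℝ (Fin n)) :
    Matrix.toEuclideanLin A v = ∑ j, v j • _root_.col A j := by
  ext k
  have h2 : (∑ j, v j • _root_.col A j) k = ∑ j, v j * A k j := by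
    induction (Finset.univ : Finset (Fin n)) using Finset.induction with
    | empty => rfl
    | insert _ _ h ih => rw [Finset.sum_insert h, Finset.sum_insert h, ← ih]; rfl
  rw [h2]
  simp [Matrix.toEuclideanLin, Matrix.mulVec, dotProduct, mul_comm]

/-- if `A x = b`, `(A + E) x̃ = b`, and `δ > 0` is the distance from the column
`fᵢ` of `A` to the span of the remaining columns, then `|xᵢ - x̃ᵢ| ≤ ‖E‖₂ ‖x̃‖₂ / δ`. -/
theorem abs_coord_diff_le_of_perturbation
    {m n : ℕ} (A E : Matrix (Fin m) (Fin n) ℝ) (b : EuclideanSpace ℝ (Fin m))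
    (x xt : EuclideanSpace ℝ (Fin n))
    (hx : Matrix.toEuclideanLin A x = b)
    (hxt : Matrix.toEuclideanLin (A + E) xt = b)
    (i : Fin n) (δ : ℝ)
    (hδ : δ = Metric.infDist (_root_.col A i)
      (↑(Submodule.span ℝ
        {w : EuclideanSpace ℝ (Fin m) | ∃ j : Fin n, j ≠ i ∧ w = _root_.col A j}) :
          Set (EuclideanSpace ℝ (Fin m))))
    (hδpos : 0 < δ) :
    |x i - xt i| ≤ opNorm E * ‖xt‖ / δ := by
  set S : Submodule ℝ (EuclideanSpace ℝ (Fin m)) :=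
    Submodule.span ℝ {w : EuclideanSpace ℝ (Fin m) | ∃ j : Fin n, j ≠ i ∧ w = _root_.col A j}
  set v : EuclideanSpace ℝ (Fin n) := x - xt with hv
  set c : ℝ := x i - xt i with hc
  -- the residual identity `A (x - x̃) = E x̃`
  have hAv : Matrix.toEuclideanLin A v = Matrix.toEuclideanLin E xt := by
    have h1 : Matrix.toEuclideanLin A xt + Matrix.toEuclideanLin E xt = b := by
      rw [← hxt, map_add]; rfl
    have : Matrix.toEuclideanLin A v
        = Matrix.toEuclideanLin A x - Matrix.toEuclideanLin A xt := by
      rw [hv, map_sub]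
    rw [this, hx, ← h1]; abel
  have hnorm : ‖Matrix.toEuclideanLin E xt‖ ≤ opNorm E * ‖xt‖ := by
    have := (Matrix.toEuclideanLin E).toContinuousLinearMap.le_opNorm xt
    simpa [opNorm] using this
  have hEnn : 0 ≤ opNorm E * ‖xt‖ / δ :=
    div_nonneg (le_trans (norm_nonneg _) hnorm) hδpos.le
  by_cases hc0 : c = 0
  · rw [← hc, hc0, abs_zero] at *; exact hEnn
  have hvi : v i = c := rfl
  set w : EuclideanSpace ℝ (Fin m) :=
    (-c⁻¹) • ∑ j ∈ Finset.univ.erase i, v j • _root_.col A j with hw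
  have hwS : w ∈ S := by
    refine S.smul_mem _ (Submodule.sum_mem _ ?_)
    intro j hj
    refine S.smul_mem _ (Submodule.subset_span ?_)
    exact ⟨j, Finset.ne_of_mem_erase hj, rfl⟩
  have hkey : _root_.col A i - w = c⁻¹ • Matrix.toEuclideanLin E xt := by
    rw [← hAv, toEuclideanLin_eq_sum_col, hw]
    rw [← Finset.add_sum_erase _ _ (Finset.mem_univ i), smul_add, hvi,
      smul_smul, inv_mul_cancel₀ hc0, one_smul]
    module
  have hdist : δ ≤ ‖_root_.col A i - w‖ := by
    rw [hδ, ← dist_eq_norm]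
    exact Metric.infDist_le_dist_of_mem hwS
  rw [hkey, norm_smul, norm_inv, Real.norm_eq_abs] at hdist
  have habs : 0 < |c| := abs_pos.mpr hc0
  have hcd : |c| * δ ≤ ‖Matrix.toEuclideanLin E xt‖ := by
    calc |c| * δ ≤ |c| * (|c|⁻¹ * ‖Matrix.toEuclideanLin E xt‖) :=
          mul_le_mul_of_nonneg_left hdist habs.le
      _ = ‖Matrix.toEuclideanLin E xt‖ := by field_simp
  have hfin := le_trans hcd hnorm
  rw [le_div_iff₀ hδpos]
  linarith [hfin]
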